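/- Let a, b ∈ [0,1] and let M be the 2×2 Markov matrix with rows (1−a, a) and (b, 1−b). Then the following are equivalent: (1) M is embeddable, i.e., M = exp(Q) for some 2×2 Markov generator Q; (2) 0 < det(M) = 1 − a − b ≤ 1; (3) a + b < 1. -/

import Mathlib

open Matrix

lemma diag_two (x y : ℝ) : Matrix.diagonal ![x, y] = !![x, 0; 0, y] := by
  ext i j
  fin_cases i <;> fin_cases j <;> simp [Matrix.diagonal_apply]

lemma exp_gen_two (α β : ℝ) (hs : α + β ≠ 0) :
    NormedSpace.exp !![-α, α; β, -β] =
      !![(β + α * Real.exp (-(α+β)))/(α+β), (α - α * Real.exp (-(α+β)))/(α+β);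
         (β - β * Real.exp (-(α+β)))/(α+β), (α + β * Real.exp (-(α+β)))/(α+β)] := by
  set s := α + β with hsdef
  set U : Matrix (Fin 2) (Fin 2) ℝ := !![1, α; 1, -β] with hU
  set V : Matrix (Fin 2) (Fin 2) ℝ := !![β/s, α/s; 1/s, -1/s] with hV
  have hUV : U * V = 1 := by
    rw [hU, hV]
    ext i j
    fin_cases i <;> fin_cases j <;>
      simp [Matrix.mul_apply, Fin.sum_univ_two, Matrix.one_apply] <;>
      field_simp <;> ring
  have hVU : V * U = 1 := by
    rw [hU, hV]
    ext i j
    fin_cases i <;> fin_cases j <;>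
      simp [Matrix.mul_apply, Fin.sum_univ_two, Matrix.one_apply] <;>
      field_simp <;> ring
  set Uu : (Matrix (Fin 2) (Fin 2) ℝ)ˣ := ⟨U, V, hUV, hVU⟩ with hUu
  have hQ : !![-α, α; β, -β] = (Uu : Matrix (Fin 2) (Fin 2) ℝ) * Matrix.diagonal ![0, -s] *
      ((Uu⁻¹ : (Matrix (Fin 2) (Fin 2) ℝ)ˣ) : Matrix (Fin 2) (Fin 2) ℝ) := by
    show !![-α, α; β, -β] = U * Matrix.diagonal ![0, -s] * V
    rw [diag_two, hU, hV]
    ext i j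
    fin_cases i <;> fin_cases j <;>
      simp [Matrix.mul_apply, Fin.sum_univ_two] <;>
      field_simp <;> ring
  rw [hQ, Matrix.exp_units_conj, Matrix.exp_diagonal]
  have hexp : NormedSpace.exp ![0, -s] = ![1, Real.exp (-s)] := by
    rw [Pi.exp_def]
    funext i
    fin_cases i <;> simp [← Real.exp_eq_exp_ℝ]
  rw [hexp]
  show U * Matrix.diagonal ![1, Real.exp (-s)] * V = _
  rw [diag_two, hU, hV]
  ext i j
  fin_cases i <;> fin_cases j <;>
    simp [Matrix.mul_apply, Fin.sum_univ_two] <;>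
    field_simp <;> ring



/-- A Markov generator (rate matrix): nonnegative off-diagonal entries,
each row sums to 0. -/
def IsGenerator {d : ℕ} (Q : Matrix (Fin d) (Fin d) ℝ) : Prop :=
  (∀ i j, i ≠ j → 0 ≤ Q i j) ∧ ∀ i, ∑ j, Q i j = 0

theorem kendall_embedding_two_dim (a b : ℝ)
    (ha : a ∈ Set.Icc (0 : ℝ) 1) (hb : b ∈ Set.Icc (0 : ℝ) 1)
    (M : Matrix (Fin 2) (Fin 2) ℝ) (hM : M = !![1 - a, a; b, 1 - b]) :
    ((∃ Q : Matrix (Fin 2) (Fin 2) ℝ, IsGenerator Q ∧ NormedSpace.exp Q = M) ↔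
      (0 < M.det ∧ M.det = 1 - a - b ∧ M.det ≤ 1)) ∧
    ((∃ Q : Matrix (Fin 2) (Fin 2) ℝ, IsGenerator Q ∧ NormedSpace.exp Q = M) ↔
      a + b < 1) := by
  obtain ⟨ha0, ha1⟩ := ha
  obtain ⟨hb0, hb1⟩ := hb
  have hdet : M.det = 1 - a - b := by
    rw [hM, Matrix.det_fin_two_of]; ring
  have hmain : (∃ Q : Matrix (Fin 2) (Fin 2) ℝ,
      IsGenerator Q ∧ NormedSpace.exp Q = M) ↔ a + b < 1 := by
    constructor
    · rintro ⟨Q, ⟨hoff, hrow⟩, hexpQ⟩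
      set α := Q 0 1 with hα
      set β := Q 1 0 with hβ
      have hα0 : 0 ≤ α := hoff 0 1 (by decide)
      have hβ0 : 0 ≤ β := hoff 1 0 (by decide)
      have hr0 := hrow 0
      have hr1 := hrow 1
      rw [Fin.sum_univ_two] at hr0 hr1
      have hQform : Q = !![-α, α; β, -β] := by
        ext i j
        fin_cases i <;> fin_cases j <;>
          simp [hα, hβ] <;> linarith
      by_cases hs : α + β = 0
      · have hα' : α = 0 := by linarith
        have hβ' : β = 0 := by linarith
        have : Q = 0 := by
          rw [hQform, hα', hβ']
          ext i j
          fin_cases i <;> fin_cases j <;> simp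
        rw [this, NormedSpace.exp_zero, hM] at hexpQ
        have h01 := congrFun (congrFun hexpQ 0) 1
        simp [Matrix.one_apply] at h01
        have h10 := congrFun (congrFun hexpQ 1) 0
        simp [Matrix.one_apply] at h10
        linarith
      · rw [hQform, exp_gen_two α β hs, hM] at hexpQ
        have h01 := congrFun (congrFun hexpQ 0) 1
        have h10 := congrFun (congrFun hexpQ 1) 0
        simp at h01 h10
        have he : 0 < Real.exp (-(α+β)) := Real.exp_pos _
        have hab : a + b = 1 - Real.exp (-(α+β)) := by
          rw [← h01, ← h10]
          field_simp
          ring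
        linarith
    · intro hlt
      by_cases hab : a + b = 0
      · have ha' : a = 0 := by linarith
        have hb' : b = 0 := by linarith
        refine ⟨0, ⟨fun i j _ => le_refl 0, fun i => by simp⟩, ?_⟩
        rw [NormedSpace.exp_zero, hM, ha', hb']
        norm_num
        exact Matrix.one_fin_two
      · have hspos : 0 < a + b := lt_of_le_of_ne (by linarith) (Ne.symm hab)
        have h1s : 0 < 1 - (a + b) := by linarith
        set lam := -Real.log (1 - (a + b)) with hlam
        have hlampos : 0 < lam := by
          rw [hlam, neg_pos]
          exact Real.log_neg h1s (by linarith)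
        set c := lam / (a + b) with hc
        have hcpos : 0 < c := div_pos hlampos hspos
        refine ⟨!![-(c*a), c*a; c*b, -(c*b)], ⟨?_, ?_⟩, ?_⟩
        · intro i j hij
          fin_cases i <;> fin_cases j <;>
            simp_all <;> positivity
        · intro i
          fin_cases i <;> simp [Fin.sum_univ_two] <;> ring
        · have hs' : c*a + c*b ≠ 0 := by
            have : c*a + c*b = c * (a+b) := by ring
            rw [this]
            positivity
          rw [exp_gen_two (c*a) (c*b) hs']
          have hexpval : Real.exp (-(c*a + c*b)) = 1 - (a + b) := by
            have h1 : c * a + c * b = lam := by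
              rw [hc]; field_simp
            rw [h1, hlam, neg_neg, Real.exp_log h1s]
          rw [hexpval, hM]
          ext i j
          fin_cases i <;> fin_cases j <;>
            simp <;> field_simp <;> ring
  refine ⟨?_, hmain⟩
  rw [hmain]
  constructor
  · intro h
    exact ⟨by rw [hdet]; linarith, hdet, by rw [hdet]; linarith⟩
  · rintro ⟨h1, _, _⟩
    rw [hdet] at h1
    linarith
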